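/- Let g : ℝ → ℝ be continuous with g(λ) → +∞ as λ → 0⁺ and g(λ) → +∞ as λ → +∞, defined on (0, ∞). Suppose that for every c ∈ ℝ, the level set {λ > 0 : g(λ) = c} contains at most two points. Then g attains its infimum on (0,∞) at a unique point λ* > 0, g is strictly decreasing on (0, λ*], and g is strictly increasing on [λ*, ∞). -/

import Mathlib

open Filter

private lemma cross_inc {g : ℝ → ℝ} (hc : ContinuousOn g (Set.Ioi 0)) {a b t : ℝ}
    (ha : 0 < a) (hab : a < b) (h1 : g a < t) (h2 : t < g b) :
    ∃ p, a < p ∧ p < b ∧ g p = t := by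
  have hsub : Set.Icc a b ⊆ Set.Ioi 0 := fun z hz => lt_of_lt_of_le ha hz.1
  obtain ⟨p, hp, hpt⟩ := intermediate_value_Ioo hab.le (hc.mono hsub) ⟨h1, h2⟩
  exact ⟨p, hp.1, hp.2, hpt⟩

private lemma cross_dec {g : ℝ → ℝ} (hc : ContinuousOn g (Set.Ioi 0)) {a b t : ℝ}
    (ha : 0 < a) (hab : a < b) (h1 : t < g a) (h2 : g b < t) :
    ∃ p, a < p ∧ p < b ∧ g p = t := by
  have hsub : Set.Icc a b ⊆ Set.Ioi 0 := fun z hz => lt_of_lt_of_le ha hz.1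
  obtain ⟨p, hp, hpt⟩ := intermediate_value_Ioo' hab.le (hc.mono hsub) ⟨h2, h1⟩
  exact ⟨p, hp.1, hp.2, hpt⟩

/-- a continuous function on `(0,∞)` blowing up at both ends whose level sets
have at most two points attains its infimum at a unique point, is strictly decreasing before
it and strictly increasing after it. -/
theorem stmt_1 (g : ℝ → ℝ)
    (hc : ContinuousOn g (Set.Ioi 0))
    (h0 : Tendsto g (nhdsWithin 0 (Set.Ioi 0)) atTop)
    (hinf : Tendsto g atTop atTop)
    (hlevel : ∀ c : ℝ, ∀ a b d : ℝ, 0 < a → 0 < b → 0 < d →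
      g a = c → g b = c → g d = c → a = b ∨ a = d ∨ b = d) :
    ∃ lam : ℝ, 0 < lam ∧ (∀ x : ℝ, 0 < x → g lam ≤ g x) ∧
      (∀ x : ℝ, 0 < x → (∀ x' : ℝ, 0 < x' → g x ≤ g x') → x = lam) ∧
      StrictAntiOn g (Set.Ioc 0 lam) ∧ StrictMonoOn g (Set.Ici lam) := by
  -- three distinct points at the same level give a contradiction
  have three : ∀ a b d : ℝ, 0 < a → 0 < b → 0 < d → a < b → b < d →
      g a = g b → g b = g d → False := by
    intro a b d ha hb hd hab hbd e1 e2
    rcases hlevel (g a) a b d ha hb hd rfl e1.symm (e1.trans e2).symm with h | h | h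
    · exact absurd h hab.ne
    · exact absurd h (hab.trans hbd).ne
    · exact absurd h hbd.ne
  -- points of large value near zero
  have near0 : ∀ t x : ℝ, 0 < x → ∃ w, 0 < w ∧ w < x ∧ t < g w := by
    intro t x hx
    have h1 : ∀ᶠ w in nhdsWithin 0 (Set.Ioi 0), t < g w :=
      h0.eventually (eventually_gt_atTop t)
    have h2 : Set.Ioo (0:ℝ) x ∈ nhdsWithin 0 (Set.Ioi (0:ℝ)) :=
      Ioo_mem_nhdsGT hx
    obtain ⟨w, hw1, hw2⟩ := (h1.and (eventually_of_mem h2 (fun y hy => hy))).exists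
    exact ⟨w, hw2.1, hw2.2, hw1⟩
  -- points of large value far away
  have far : ∀ t x : ℝ, ∃ R, x < R ∧ t < g R := by
    intro t x
    obtain ⟨R, h1, h2⟩ := ((hinf.eventually (eventually_gt_atTop t)).and
      (eventually_gt_atTop x)).exists
    exact ⟨R, h2, h1⟩
  -- existence of a global minimizer
  have hmem : {x : ℝ | g 1 < g x} ∈ nhdsWithin 0 (Set.Ioi (0:ℝ)) :=
    h0.eventually (eventually_gt_atTop (g 1))
  rw [mem_nhdsGT_iff_exists_Ioo_subset] at hmem
  obtain ⟨ε, hε, hεsub⟩ := hmem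
  have hε0 : (0:ℝ) < ε := hε
  obtain ⟨M, hM⟩ := eventually_atTop.mp (hinf.eventually (eventually_gt_atTop (g 1)))
  set a := min (ε/2) 1 with ha_def
  set b := max M 1 with hb_def
  have ha0 : 0 < a := lt_min (by linarith) one_pos
  have h1ab : (1:ℝ) ∈ Set.Icc a b := ⟨min_le_right _ _, le_max_right _ _⟩
  have hsub : Set.Icc a b ⊆ Set.Ioi 0 := fun z hz => lt_of_lt_of_le ha0 hz.1
  obtain ⟨lam, hlamIcc, hlammin⟩ := isCompact_Icc.exists_isMinOn ⟨1, h1ab⟩ (hc.mono hsub)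
  have hlam0 : 0 < lam := hsub hlamIcc
  have hmin : ∀ x : ℝ, 0 < x → g lam ≤ g x := by
    intro x hx
    rcases lt_or_ge x a with hxa | hax
    · have hxε : x < ε := lt_of_lt_of_le hxa (le_trans (min_le_left _ _) (by linarith))
      have : g 1 < g x := hεsub ⟨hx, hxε⟩
      exact le_trans (isMinOn_iff.mp hlammin 1 h1ab) this.le
    rcases le_or_gt x b with hxb | hbx
    · exact isMinOn_iff.mp hlammin x ⟨hax, hxb⟩
    · have : g 1 < g x := hM x (le_trans (le_max_left _ _) hbx.le)
      exact le_trans (isMinOn_iff.mp hlammin 1 h1ab) this.le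
  -- strict minimality away from lam
  have uniq : ∀ x : ℝ, 0 < x → x ≠ lam → g lam < g x := by
    intro x hx hne
    by_contra hcon
    push_neg at hcon
    have hxm : g x = g lam := le_antisymm hcon (hmin x hx)
    rcases lt_or_gt_of_ne hne with hlt | hgt
    · -- x < lam
      have hz1 : x < (x + lam) / 2 := by linarith
      have hz2 : (x + lam) / 2 < lam := by linarith
      have hz0 : 0 < (x + lam) / 2 := hx.trans hz1
      rcases eq_or_lt_of_le (hmin _ hz0) with he | hzgt
      · exact three x _ lam hx hz0 hlam0 hz1 hz2 (hxm.trans he) he.symm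
      · set t := (g lam + g ((x + lam) / 2)) / 2 with ht
        have ht1 : g lam < t := by rw [ht]; linarith
        have ht2 : t < g ((x + lam) / 2) := by rw [ht]; linarith
        obtain ⟨p, hp1, hp2, hpt⟩ := cross_inc hc hx hz1 (by rw [hxm]; exact ht1) ht2
        obtain ⟨q, hq1, hq2, hqt⟩ := cross_dec hc hz0 hz2 ht2 ht1
        obtain ⟨R, hR1, hR2⟩ := far t lam
        obtain ⟨r, hr1, hr2, hrt⟩ := cross_inc hc hlam0 hR1 ht1 hR2
        exact three p q r (hx.trans hp1) (hz0.trans hq1) (hlam0.trans hr1)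
          (hp2.trans hq1) (hq2.trans hr1) (hpt.trans hqt.symm) (hqt.trans hrt.symm)
    · -- lam < x
      have hz1 : lam < (lam + x) / 2 := by linarith
      have hz2 : (lam + x) / 2 < x := by linarith
      have hz0 : 0 < (lam + x) / 2 := hlam0.trans hz1
      rcases eq_or_lt_of_le (hmin _ hz0) with he | hzgt
      · exact three lam _ x hlam0 hz0 hx hz1 hz2 he (he.symm.trans hxm.symm)
      · set t := (g lam + g ((lam + x) / 2)) / 2 with ht
        have ht1 : g lam < t := by rw [ht]; linarith
        have ht2 : t < g ((lam + x) / 2) := by rw [ht]; linarith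
        obtain ⟨p, hp1, hp2, hpt⟩ := cross_inc hc hlam0 hz1 ht1 ht2
        obtain ⟨q, hq1, hq2, hqt⟩ := cross_dec hc hz0 hz2 ht2 (by rw [hxm]; exact ht1)
        obtain ⟨R, hR1, hR2⟩ := far t x
        obtain ⟨r, hr1, hr2, hrt⟩ := cross_inc hc hx hR1 (by rw [hxm]; exact ht1) hR2
        exact three p q r (hlam0.trans hp1) (hz0.trans hq1) (hx.trans hr1)
          (hp2.trans hq1) (hq2.trans hr1) (hpt.trans hqt.symm) (hqt.trans hrt.symm)
  -- strictly decreasing before lam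
  have anti : StrictAntiOn g (Set.Ioc 0 lam) := by
    intro x hx y hy hxy
    by_contra hcon
    push_neg at hcon  -- g x ≤ g y
    have hx0 : 0 < x := hx.1
    have hy0 : 0 < y := hy.1
    have hxlam : x < lam := lt_of_lt_of_le hxy hy.2
    have hgx : g lam < g x := uniq x hx0 hxlam.ne
    have hylam : y < lam := by
      rcases eq_or_lt_of_le hy.2 with he | h'
      · rw [he] at hcon; exact absurd (lt_of_lt_of_le hgx hcon) (lt_irrefl _)
      · exact h'
    have hgy : g lam < g y := uniq y hy0 hylam.ne
    rcases eq_or_lt_of_le hcon with he | hlt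
    · -- g x = g y, use midpoint
      have hw1 : x < (x + y) / 2 := by linarith
      have hw2 : (x + y) / 2 < y := by linarith
      have hw0 : 0 < (x + y) / 2 := hx0.trans hw1
      have hwlam : (x + y) / 2 < lam := hw2.trans hylam
      have hgw : g lam < g ((x + y) / 2) := uniq _ hw0 hwlam.ne
      rcases lt_trichotomy (g ((x + y) / 2)) (g x) with hcmp | hcmp | hcmp
      · set t := (g ((x + y) / 2) + g x) / 2 with ht
        have ht1 : g ((x + y) / 2) < t := by rw [ht]; linarith
        have ht2 : t < g x := by rw [ht]; linarith
        have htlam : g lam < t := lt_trans hgw ht1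
        obtain ⟨p, hp1, hp2, hpt⟩ := cross_dec hc hx0 hw1 ht2 ht1
        obtain ⟨q, hq1, hq2, hqt⟩ := cross_inc hc hw0 hw2 ht1 (by rw [← he]; exact ht2)
        obtain ⟨r, hr1, hr2, hrt⟩ := cross_dec hc hy0 hylam (by rw [← he]; exact ht2) htlam
        exact three p q r (hx0.trans hp1) (hw0.trans hq1) (hy0.trans hr1)
          (hp2.trans hq1) (hq2.trans hr1) (hpt.trans hqt.symm) (hqt.trans hrt.symm)
      · exact three x _ y hx0 hw0 hy0 hw1 hw2 hcmp.symm (hcmp.trans he)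
      · set t := (g x + g ((x + y) / 2)) / 2 with ht
        have ht1 : g x < t := by rw [ht]; linarith
        have ht2 : t < g ((x + y) / 2) := by rw [ht]; linarith
        have htlam : g lam < t := lt_trans hgx ht1
        obtain ⟨w0, hw01, hw02, hw03⟩ := near0 t x hx0
        obtain ⟨p, hp1, hp2, hpt⟩ := cross_dec hc hw01 hw02 hw03 ht1
        obtain ⟨q, hq1, hq2, hqt⟩ := cross_inc hc hx0 hw1 ht1 ht2
        obtain ⟨r, hr1, hr2, hrt⟩ := cross_dec hc hw0 hw2 ht2 (by rw [← he]; exact ht1)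
        exact three p q r (hw01.trans hp1) (hx0.trans hq1) (hw0.trans hr1)
          (hp2.trans hq1) (hq2.trans hr1) (hpt.trans hqt.symm) (hqt.trans hrt.symm)
    · -- g x < g y
      set t := (g x + g y) / 2 with ht
      have ht1 : g x < t := by rw [ht]; linarith
      have ht2 : t < g y := by rw [ht]; linarith
      have htlam : g lam < t := lt_trans hgx ht1
      obtain ⟨w0, hw01, hw02, hw03⟩ := near0 t x hx0
      obtain ⟨p, hp1, hp2, hpt⟩ := cross_dec hc hw01 hw02 hw03 ht1
      obtain ⟨q, hq1, hq2, hqt⟩ := cross_inc hc hx0 hxy ht1 ht2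
      obtain ⟨r, hr1, hr2, hrt⟩ := cross_dec hc hy0 hylam ht2 htlam
      exact three p q r (hw01.trans hp1) (hx0.trans hq1) (hy0.trans hr1)
        (hp2.trans hq1) (hq2.trans hr1) (hpt.trans hqt.symm) (hqt.trans hrt.symm)
  -- strictly increasing after lam
  have mono : StrictMonoOn g (Set.Ici lam) := by
    intro x hx y hy hxy
    by_contra hcon
    push_neg at hcon  -- g y ≤ g x
    have hx0 : 0 < x := lt_of_lt_of_le hlam0 hx
    have hy0 : 0 < y := hx0.trans hxy
    have hylam : lam < y := lt_of_le_of_lt hx hxy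
    have hgy : g lam < g y := uniq y hy0 hylam.ne'
    have hxlam : lam < x := by
      rcases eq_or_lt_of_le (Set.mem_Ici.mp hx) with he | h'
      · rw [← he] at hcon; exact absurd (lt_of_lt_of_le hgy hcon) (lt_irrefl _)
      · exact h'
    have hgx : g lam < g x := uniq x hx0 hxlam.ne'
    rcases eq_or_lt_of_le hcon with he | hlt
    · -- g y = g x, use midpoint
      have hw1 : x < (x + y) / 2 := by linarith
      have hw2 : (x + y) / 2 < y := by linarith
      have hw0 : 0 < (x + y) / 2 := hx0.trans hw1
      have hwlam : lam < (x + y) / 2 := hxlam.trans hw1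
      have hgw : g lam < g ((x + y) / 2) := uniq _ hw0 hwlam.ne'
      rcases lt_trichotomy (g ((x + y) / 2)) (g x) with hcmp | hcmp | hcmp
      · set t := (g ((x + y) / 2) + g x) / 2 with ht
        have ht1 : g ((x + y) / 2) < t := by rw [ht]; linarith
        have ht2 : t < g x := by rw [ht]; linarith
        have htlam : g lam < t := lt_trans hgw ht1
        obtain ⟨p, hp1, hp2, hpt⟩ := cross_inc hc hlam0 hxlam htlam ht2
        obtain ⟨q, hq1, hq2, hqt⟩ := cross_dec hc hx0 hw1 ht2 ht1
        obtain ⟨r, hr1, hr2, hrt⟩ := cross_inc hc hw0 hw2 ht1 (by rw [he]; exact ht2)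
        exact three p q r (hlam0.trans hp1) (hx0.trans hq1) (hw0.trans hr1)
          (hp2.trans hq1) (hq2.trans hr1) (hpt.trans hqt.symm) (hqt.trans hrt.symm)
      · exact three x _ y hx0 hw0 hy0 hw1 hw2 hcmp.symm (hcmp.trans he.symm)
      · set t := (g x + g ((x + y) / 2)) / 2 with ht
        have ht1 : g x < t := by rw [ht]; linarith
        have ht2 : t < g ((x + y) / 2) := by rw [ht]; linarith
        obtain ⟨p, hp1, hp2, hpt⟩ := cross_inc hc hx0 hw1 ht1 ht2
        obtain ⟨q, hq1, hq2, hqt⟩ := cross_dec hc hw0 hw2 ht2 (by rw [he]; exact ht1)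
        obtain ⟨R, hR1, hR2⟩ := far t y
        obtain ⟨r, hr1, hr2, hrt⟩ := cross_inc hc hy0 hR1 (by rw [he]; exact ht1) hR2
        exact three p q r (hx0.trans hp1) (hw0.trans hq1) (hy0.trans hr1)
          (hp2.trans hq1) (hq2.trans hr1) (hpt.trans hqt.symm) (hqt.trans hrt.symm)
    · -- g y < g x
      set t := (g y + g x) / 2 with ht
      have ht1 : g y < t := by rw [ht]; linarith
      have ht2 : t < g x := by rw [ht]; linarith
      have htlam : g lam < t := lt_trans hgy ht1
      obtain ⟨p, hp1, hp2, hpt⟩ := cross_inc hc hlam0 hxlam htlam ht2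
      obtain ⟨q, hq1, hq2, hqt⟩ := cross_dec hc hx0 hxy ht2 ht1
      obtain ⟨R, hR1, hR2⟩ := far t y
      obtain ⟨r, hr1, hr2, hrt⟩ := cross_inc hc hy0 hR1 ht1 hR2
      exact three p q r (hlam0.trans hp1) (hx0.trans hq1) (hy0.trans hr1)
        (hp2.trans hq1) (hq2.trans hr1) (hpt.trans hqt.symm) (hqt.trans hrt.symm)
  refine ⟨lam, hlam0, hmin, ?_, anti, mono⟩
  intro x hx hxmin
  by_contra hne
  exact absurd (hxmin lam hlam0) (not_le.mpr (uniq x hx hne))
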